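/- Let X be a Tychonoff (completely regular Hausdorff) space which is an s_ℝ-space, and let U be an open subset of X. Then U, with the subspace topology, is an s_ℝ-space. -/
import Mathlib


open Set Filter Topology

universe u

/-- A function `f : X → ℝ` is sequentially continuous if `f (x n) → f x` whenever a
sequence `(x n)` converges to `x` in `X`. -/
def SeqCont {X : Type*} [TopologicalSpace X] (f : X → ℝ) : Prop :=
  ∀ (u : ℕ → X) (x : X), Tendsto u atTop (nhds x) →
    Tendsto (fun n => f (u n)) atTop (nhds (f x))

/-- A topological space `X` is an `s_ℝ`-space if every sequentially continuous real-valued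
function on `X` is continuous. -/
def IsSRSpace (X : Type*) [TopologicalSpace X] : Prop :=
  ∀ f : X → ℝ, SeqCont f → Continuous f

theorem sR_open_subspace
    (X : Type*) [TopologicalSpace X] [CompletelyRegularSpace X] [T2Space X]
    (hX : IsSRSpace X) (U : Set X) (hU : IsOpen U) :
    IsSRSpace U := by
  classical
  intro f hf
  rw [continuous_iff_continuousAt]
  rintro ⟨x₀, hx₀⟩
  obtain ⟨φ, hφc, hφ0, hφ1⟩ :=
    CompletelyRegularSpace.completely_regular x₀ Uᶜ hU.isClosed_compl (by simpa using hx₀)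
  -- ψ is a continuous function with ψ x₀ = 1, ψ = 0 off U, 0 ≤ ψ ≤ 1
  set ψ : X → ℝ := fun x => 1 - (φ x : ℝ) with hψdef
  have hψc : Continuous ψ := continuous_const.sub (continuous_induced_dom.comp hφc)
  have hψ0 : ∀ x ∉ U, ψ x = 0 := by
    intro x hx
    have : φ x = 1 := hφ1 hx
    simp [hψdef, this]
  have hψle : ∀ x, ψ x ≤ 1 := fun x => by
    have := (φ x).2.1; simp [hψdef]; linarith
  have hψnn : ∀ x, 0 ≤ ψ x := fun x => by
    have := (φ x).2.2; simp [hψdef]; linarith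
  have hψx₀ : ψ x₀ = 1 := by simp [hψdef, hφ0]
  -- the global function g
  set g : X → ℝ := fun x => if h : x ∈ U then ψ x * Real.arctan (f ⟨x, h⟩) else 0 with hgdef
  have hgbound : ∀ x, |g x| ≤ ψ x * (Real.pi / 2) := by
    intro x
    by_cases h : x ∈ U
    · simp only [hgdef, dif_pos h, abs_mul, abs_of_nonneg (hψnn x)]
      refine mul_le_mul_of_nonneg_left ?_ (hψnn x)
      exact (abs_lt.2 ⟨Real.neg_pi_div_two_lt_arctan _, Real.arctan_lt_pi_div_two _⟩).le
    · simp [hgdef, dif_neg h, hψ0 x h, mul_nonneg (hψnn x) (by positivity : (0:ℝ) ≤ Real.pi / 2)]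
  -- g is sequentially continuous
  have hg : SeqCont g := by
    intro u x hu
    by_cases hx : ψ x = 0
    · have hgx : g x = 0 := by
        by_cases h : x ∈ U
        · simp [hgdef, dif_pos h, hx]
        · simp [hgdef, dif_neg h]
      rw [hgx]
      have hψt : Tendsto (fun n => ψ (u n) * (Real.pi / 2)) atTop (𝓝 0) := by
        have := ((hψc.tendsto x).comp hu).mul_const (Real.pi / 2)
        simpa [hx] using this
      exact squeeze_zero_norm (fun n => by simpa using hgbound (u n)) hψt
    · have hxU : x ∈ U := by
        by_contra h
        exact hx (hψ0 x h)
      have hev : ∀ᶠ n in atTop, u n ∈ U := hu (hU.mem_nhds hxU)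
      set v : ℕ → U := fun n => if h : u n ∈ U then ⟨u n, h⟩ else ⟨x, hxU⟩ with hvdef
      have hv : Tendsto v atTop (𝓝 (⟨x, hxU⟩ : U)) := by
        rw [tendsto_subtype_rng]
        refine hu.congr' ?_
        filter_upwards [hev] with n hn
        simp [hvdef, dif_pos hn]
      have hfv := hf v ⟨x, hxU⟩ hv
      have hgoal : Tendsto (fun n => ψ (u n) * Real.arctan (f (v n))) atTop
          (𝓝 (ψ x * Real.arctan (f ⟨x, hxU⟩))) :=
        (((hψc.tendsto x).comp hu)).mul (Real.continuous_arctan.continuousAt.tendsto.comp hfv)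
      have hgx : g x = ψ x * Real.arctan (f ⟨x, hxU⟩) := by simp [hgdef, dif_pos hxU]
      rw [hgx]
      refine Tendsto.congr' ?_ hgoal
      filter_upwards [hev] with n hn
      simp [hgdef, hvdef, dif_pos hn]
  have hgc : Continuous g := hX g hg
  -- recover continuity of f at x₀
  set V : Set X := {x | 0 < ψ x} with hVdef
  have hVopen : IsOpen V := isOpen_lt continuous_const hψc
  have hx₀V : x₀ ∈ V := by simp [hVdef, hψx₀]
  have hVU : V ⊆ U := fun x hx => by
    by_contra h
    simp [hVdef, hψ0 x h] at hx
  -- on V, f = tan (g / ψ)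
  have heq : ∀ x : U, (x : X) ∈ V → f x = Real.tan (g x / ψ x) := by
    rintro ⟨x, hxU⟩ hxV
    have hψne : ψ x ≠ 0 := ne_of_gt hxV
    simp only [hgdef, dif_pos hxU]
    rw [mul_div_assoc, mul_comm, div_mul_cancel₀ _ hψne, Real.tan_arctan]
  have htanc : ContinuousAt Real.tan (g x₀ / ψ x₀) := by
    have harc : g x₀ / ψ x₀ = Real.arctan (f ⟨x₀, hx₀⟩) := by
      simp [hgdef, dif_pos hx₀, hψx₀]
    rw [harc]
    exact Real.continuousAt_tan.2 (ne_of_gt (Real.cos_arctan_pos _))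
  have hquot : ContinuousAt (fun x : U => g x / ψ x) ⟨x₀, hx₀⟩ := by
    refine ContinuousAt.div ?_ ?_ (by simp [hψx₀])
    · exact (hgc.comp continuous_subtype_val).continuousAt
    · exact (hψc.comp continuous_subtype_val).continuousAt
  have hcomp : ContinuousAt (fun x : U => Real.tan (g x / ψ x)) ⟨x₀, hx₀⟩ := by
    show ContinuousAt (Real.tan ∘ fun x : U => g x / ψ x) ⟨x₀, hx₀⟩
    exact ContinuousAt.comp htanc hquot
  refine hcomp.congr ?_
  have hmem : (Subtype.val ⁻¹' V : Set U) ∈ 𝓝 (⟨x₀, hx₀⟩ : U) :=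
    (hVopen.preimage continuous_subtype_val).mem_nhds hx₀V
  filter_upwards [hmem] with x hx
  exact (heq x hx).symm
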